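/- (First scenario) Let γ ≠ 0 and set Γ12 = −γ, Γ21 = −γ, Γ11 = −3γ, Γ22 = 3γ, α = −6γ. Then the coexistence equilibrium of the system df₁/dt = −α f₁ f₂ + Γ11 f₁(1−f₁) + Γ12 f₂(1−f₂), df₂/dt = α f₁ f₂ + Γ21 f₁(1−f₁) + Γ22 f₂(1−f₂) is E₁ = (5/47, 35/47), and the Jacobian matrix J of the vector field at E₁, namely J = [[−α f₂* + (1−2f₁*)Γ11, −α f₁* + (1−2f₂*)Γ12],[α f₂* + (1−2f₁*)Γ21, α f₁* + (1−2f₂*)Γ22]], has trace 0 and strictly positive determinant; consequently its eigenvalues are purely imaginary and nonzero (E₁ is a linear center). -/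
import Mathlib


/-- **First scenario.** With `Γ₁² = −γ`, `Γ₂¹ = −γ`, `Γ₁¹ = −3γ`,
`Γ₂² = 3γ`, `α = −6γ` (`γ ≠ 0`), the coexistence equilibrium is `E₁ = (5/47, 35/47)`,
and the Jacobian matrix at `E₁` has zero trace and strictly positive determinant, so its
eigenvalues (the roots of the characteristic polynomial `μ² − (tr J) μ + det J`) are
purely imaginary and nonzero: `E₁` is a linear center. -/
theorem first_scenario_center (γ : ℝ) (hγ : γ ≠ 0) :
    let Γ12 : ℝ := -γ
    let Γ21 : ℝ := -γ
    let Γ11 : ℝ := -3 * γ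
    let Γ22 : ℝ := 3 * γ
    let α : ℝ := -6 * γ
    let f₁ : ℝ := 5 / 47
    let f₂ : ℝ := 35 / 47
    let J : Matrix (Fin 2) (Fin 2) ℝ :=
      !![-α * f₂ + (1 - 2 * f₁) * Γ11, -α * f₁ + (1 - 2 * f₂) * Γ12;
          α * f₂ + (1 - 2 * f₁) * Γ21,  α * f₁ + (1 - 2 * f₂) * Γ22]
    (-α * f₁ * f₂ + Γ11 * f₁ * (1 - f₁) + Γ12 * f₂ * (1 - f₂) = 0 ∧
      α * f₁ * f₂ + Γ21 * f₁ * (1 - f₁) + Γ22 * f₂ * (1 - f₂) = 0) ∧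
    Matrix.trace J = 0 ∧ 0 < J.det ∧
    ∀ μ : ℂ, μ ^ 2 - (Matrix.trace J : ℝ) * μ + (J.det : ℝ) = 0 →
      μ.re = 0 ∧ μ ≠ 0 := by
  intro Γ12 Γ21 Γ11 Γ22 α f₁ f₂ J
  have htr : Matrix.trace J = 0 := by
    simp only [J, Matrix.trace_fin_two_of, α, Γ11, Γ22, f₁, f₂]; ring
  have hdet : J.det = 3290 / 2209 * γ ^ 2 := by
    simp only [J, Matrix.det_fin_two_of, α, Γ11, Γ22, Γ12, Γ21, f₁, f₂]; ring
  have hdpos : 0 < J.det := by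
    rw [hdet]; positivity
  refine ⟨⟨by simp only [α, Γ11, Γ12, f₁, f₂]; ring,
    by simp only [α, Γ21, Γ22, f₁, f₂]; ring⟩, htr, hdpos, ?_⟩
  intro μ hμ
  rw [htr] at hμ
  have h2 : μ ^ 2 = -((J.det : ℝ) : ℂ) := by
    push_cast at hμ ⊢; linear_combination hμ
  have hμ0 : μ ≠ 0 := by
    intro h; rw [h] at h2
    norm_num at h2
    exact absurd h2 (ne_of_gt hdpos)
  refine ⟨?_, hμ0⟩
  have hre : μ.re ^ 2 - μ.im ^ 2 = -J.det := by
    have := congrArg Complex.re h2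
    simpa [pow_two, Complex.mul_re] using this
  have him0 : μ.re * μ.im + μ.im * μ.re = 0 := by
    have := congrArg Complex.im h2
    simpa [pow_two, Complex.mul_im] using this
  have him : μ.re * μ.im = 0 := by linarith
  by_contra hr
  have : μ.im = 0 := by
    rcases mul_eq_zero.mp him with h | h
    · exact absurd h hr
    · exact h
  rw [this] at hre
  nlinarith [sq_nonneg μ.re, hdpos]
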